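/- Let R be a commutative ring and n ≥ 3. Let M = (Fin n → R) × (Fin n → R) with hyperbolic quadratic form Q(x, y) = Σ_i x(i)·y(i), whose polar form is b((x,y),(x',y')) = Σ_i (x(i)·y'(i) + x'(i)·y(i)). Let Cl(Q) be the Clifford algebra of Q with structure map ι and canonical involution reverse (the anti-automorphism fixing every ι(m)). Let T : M ⊗_R M → R be the linear map induced by (m₁, m₂) ↦ b(m₁, m₂), and let C : M ⊗_R M → Cl(Q) be the linear map induced by (m₁, m₂) ↦ ι(m₁)·ι(m₂). Then C maps the kernel of T into the image of the linear map (id − reverse) : Cl(Q) → Cl(Q). (In other words, sections of trace zero are carried by the canonical map into alternating elements of the Clifford algebra.) -/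

import Mathlib

open CliffordAlgebra TensorProduct

/-- The bilinear map `((x, y), (x', y')) ↦ Σ_i x i * y' i` on `(Fin n → R) × (Fin n → R)`. -/
noncomputable def hypBilin (R : Type*) [CommRing R] (n : ℕ) :
    ((Fin n → R) × (Fin n → R)) →ₗ[R] ((Fin n → R) × (Fin n → R)) →ₗ[R] R :=
  LinearMap.mk₂ R (fun p q => ∑ i, p.1 i * q.2 i)
    (fun m₁ m₂ q => by simp [add_mul, Finset.sum_add_distrib])
    (fun c m q => by simp [Finset.mul_sum, mul_assoc])
    (fun m q₁ q₂ => by simp [mul_add, Finset.sum_add_distrib])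
    (fun c m q => by simp [Finset.mul_sum, mul_left_comm])

/-- The hyperbolic quadratic form `Q(x, y) = Σ_i x i * y i` on `(Fin n → R) × (Fin n → R)`. -/
noncomputable def hypQ (R : Type*) [CommRing R] (n : ℕ) :
    QuadraticForm R ((Fin n → R) × (Fin n → R)) :=
  LinearMap.BilinMap.toQuadraticMap (hypBilin R n)

theorem hypQ_apply (R : Type*) [CommRing R] (n : ℕ) (p : (Fin n → R) × (Fin n → R)) :
    hypQ R n p = ∑ i, p.1 i * p.2 i := rfl

/-- The "reduced trace": the linear map on `M ⊗ M` induced by the polar form of `hypQ`. -/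
noncomputable def trdT (R : Type*) [CommRing R] (n : ℕ) :
    (((Fin n → R) × (Fin n → R)) ⊗[R] ((Fin n → R) × (Fin n → R))) →ₗ[R] R :=
  TensorProduct.lift (QuadraticMap.polarBilin (hypQ R n))

/-- The "canonical map": the linear map on `M ⊗ M` induced by `(m₁, m₂) ↦ ι m₁ * ι m₂`. -/
noncomputable def canonC (R : Type*) [CommRing R] (n : ℕ) :
    (((Fin n → R) × (Fin n → R)) ⊗[R] ((Fin n → R) × (Fin n → R))) →ₗ[R]
      CliffordAlgebra (hypQ R n) :=
  TensorProduct.lift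
    ((LinearMap.mul R (CliffordAlgebra (hypQ R n))).compl₁₂ (ι (hypQ R n)) (ι (hypQ R n)))

/-! ### Auxiliary ring lemmas -/

section RingLemmas
variable {A : Type*} [Ring A] (α β μ ν : A)

private lemma alt_ringComm (hμα : μ*α = -(α*μ)) (hμβ : μ*β = -(β*μ))
    (hνα : ν*α = -(α*ν)) (hνβ : ν*β = -(β*ν)) :
    μ*ν*(α*β) = α*β*(μ*ν) := by
  calc μ*ν*(α*β) = μ*(ν*α)*β := by noncomm_ring
  _ = μ*(-(α*ν))*β := by rw [hνα]
  _ = -((μ*α)*(ν*β)) := by noncomm_ring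
  _ = -((-(α*μ))*(ν*β)) := by rw [hμα]
  _ = α*μ*(ν*β) := by noncomm_ring
  _ = α*μ*(-(β*ν)) := by rw [hνβ]
  _ = -(α*(μ*β)*ν) := by noncomm_ring
  _ = -(α*(-(β*μ))*ν) := by rw [hμβ]
  _ = α*β*(μ*ν) := by noncomm_ring

private lemma alt_ringA (hβα : β*α = 1 - α*β) (hμα : μ*α = -(α*μ)) (hμβ : μ*β = -(β*μ))
    (hνα : ν*α = -(α*ν)) (hνβ : ν*β = -(β*ν)) (hνμ : ν*μ = -(μ*ν)) :
    α*β*(μ*ν) - ν*μ*(β*α) = μ*ν := by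
  have key : ν*μ*(β*α) = -(μ*ν) + α*β*(μ*ν) := by
    calc ν*μ*(β*α) = (-(μ*ν))*β*α := by rw [hνμ]; noncomm_ring
    _ = -(μ*(ν*β)*α) := by noncomm_ring
    _ = -(μ*(-(β*ν))*α) := by rw [hνβ]
    _ = μ*β*(ν*α) := by noncomm_ring
    _ = μ*β*(-(α*ν)) := by rw [hνα]
    _ = -((μ*β)*α*ν) := by noncomm_ring
    _ = -((-(β*μ))*α*ν) := by rw [hμβ]
    _ = β*(μ*α)*ν := by noncomm_ring
    _ = β*(-(α*μ))*ν := by rw [hμα]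
    _ = -((β*α)*(μ*ν)) := by noncomm_ring
    _ = -((1 - α*β)*(μ*ν)) := by rw [hβα]
    _ = -(μ*ν) + α*β*(μ*ν) := by noncomm_ring
  rw [key]; noncomm_ring

private lemma alt_ringB (hβα : β*α = 1 - α*β) (hνμ : ν*μ = 1 - μ*ν)
    (hμα : μ*α = -(α*μ)) (hμβ : μ*β = -(β*μ))
    (hνα : ν*α = -(α*ν)) (hνβ : ν*β = -(β*ν)) :
    μ*ν - ν*μ - (μ*ν*(α*β) - β*α*(ν*μ)) = μ*ν - α*β := by
  rw [alt_ringComm α β μ ν hμα hμβ hνα hνβ, hνμ, hβα]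
  noncomm_ring

end RingLemmas

/-! ### Auxiliary Clifford algebra lemmas -/

section CliffordLemmas
variable {R : Type*} [CommRing R] {M : Type*} [AddCommGroup M] [Module R M]
  {Q : QuadraticForm R M}

private lemma ι_anti {u v : M} (h : QuadraticMap.polar Q u v = 0) :
    ι Q v * ι Q u = -(ι Q u * ι Q v) := by
  rw [ι_mul_ι_comm, QuadraticMap.polar_comm, h, map_zero, zero_sub]

private lemma ι_one {u v : M} (h : QuadraticMap.polar Q u v = 1) :
    ι Q v * ι Q u = 1 - ι Q u * ι Q v := by
  rw [ι_mul_ι_comm, QuadraticMap.polar_comm, h, map_one]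

private lemma mem_alt_swap (a b : M) :
    ι Q b * ι Q a - ι Q a * ι Q b ∈ LinearMap.range
      (LinearMap.id - (reverse (Q := Q) : CliffordAlgebra Q →ₗ[R] CliffordAlgebra Q)) := by
  refine ⟨-(ι Q a * ι Q b), ?_⟩
  simp only [LinearMap.sub_apply, LinearMap.id_apply, map_neg, reverse.map_mul, reverse_ι]
  noncomm_ring

private lemma mem_alt_A (a b : M) {u v : M} (hab : QuadraticMap.polar Q a b = 1)
    (hau : QuadraticMap.polar Q a u = 0) (hav : QuadraticMap.polar Q a v = 0)
    (hbu : QuadraticMap.polar Q b u = 0) (hbv : QuadraticMap.polar Q b v = 0)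
    (huv : QuadraticMap.polar Q u v = 0) :
    ι Q u * ι Q v ∈ LinearMap.range
      (LinearMap.id - (reverse (Q := Q) : CliffordAlgebra Q →ₗ[R] CliffordAlgebra Q)) := by
  refine ⟨ι Q a * ι Q b * (ι Q u * ι Q v), ?_⟩
  simp only [LinearMap.sub_apply, LinearMap.id_apply, reverse.map_mul, reverse_ι]
  exact alt_ringA _ _ _ _ (ι_one hab) (ι_anti hau) (ι_anti hbu) (ι_anti hav) (ι_anti hbv)
    (ι_anti huv)

private lemma mem_alt_B (a b : M) {u v : M} (hab : QuadraticMap.polar Q a b = 1)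
    (huv : QuadraticMap.polar Q u v = 1)
    (hau : QuadraticMap.polar Q a u = 0) (hav : QuadraticMap.polar Q a v = 0)
    (hbu : QuadraticMap.polar Q b u = 0) (hbv : QuadraticMap.polar Q b v = 0) :
    ι Q u * ι Q v - ι Q a * ι Q b ∈ LinearMap.range
      (LinearMap.id - (reverse (Q := Q) : CliffordAlgebra Q →ₗ[R] CliffordAlgebra Q)) := by
  refine ⟨ι Q u * ι Q v - ι Q u * ι Q v * (ι Q a * ι Q b), ?_⟩
  simp only [LinearMap.sub_apply, LinearMap.id_apply, map_sub, reverse.map_mul, reverse_ι]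
  have h := alt_ringB (ι Q a) (ι Q b) (ι Q u) (ι Q v) (ι_one hab) (ι_one huv) (ι_anti hau)
    (ι_anti hbu) (ι_anti hav) (ι_anti hbv)
  exact h

/-- If a bilinear map sends all pairs of basis vectors into a submodule, it sends everything
into that submodule. -/
private lemma bilin_mem_of_basis {A : Type*} [AddCommGroup A] [Module R A] {κ : Type*} [Fintype κ]
    (b : Module.Basis κ R M) (φ : M →ₗ[R] M →ₗ[R] A) (S : Submodule R A)
    (h : ∀ i j, φ (b i) (b j) ∈ S) (m₁ m₂ : M) : φ m₁ m₂ ∈ S := by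
  have h1 : ∀ (i : κ) (m : M), φ (b i) m ∈ S := by
    intro i m
    rw [← b.sum_repr m, map_sum]
    exact S.sum_mem fun j _ => by rw [map_smul]; exact S.smul_mem _ (h i j)
  rw [← b.sum_repr m₁, map_sum, LinearMap.sum_apply]
  exact S.sum_mem fun i _ => by
    rw [map_smul, LinearMap.smul_apply]; exact S.smul_mem _ (h1 i m₂)

end CliffordLemmas

/-! ### The hyperbolic basis vectors -/

section HypLemmas
variable (R : Type*) [CommRing R] (n : ℕ)

/-- The first family of hyperbolic basis vectors. -/
noncomputable def hypE (i : Fin n) : (Fin n → R) × (Fin n → R) := (Pi.single i 1, 0)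

/-- The second family of hyperbolic basis vectors. -/
noncomputable def hypF (i : Fin n) : (Fin n → R) × (Fin n → R) := (0, Pi.single i 1)

lemma polar_hyp (p q : (Fin n → R) × (Fin n → R)) :
    QuadraticMap.polar (hypQ R n) p q = (∑ i, p.1 i * q.2 i) + ∑ i, q.1 i * p.2 i :=
  LinearMap.BilinMap.polar_toQuadraticMap p q

lemma polar_ee (i j : Fin n) : QuadraticMap.polar (hypQ R n) (hypE R n i) (hypE R n j) = 0 := by
  simp [polar_hyp, hypE]

lemma polar_ff (i j : Fin n) : QuadraticMap.polar (hypQ R n) (hypF R n i) (hypF R n j) = 0 := by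
  simp [polar_hyp, hypF]

lemma polar_ef (i j : Fin n) :
    QuadraticMap.polar (hypQ R n) (hypE R n i) (hypF R n j) = if i = j then 1 else 0 := by
  simp [polar_hyp, hypE, hypF, Pi.single_apply, eq_comm]

lemma polar_fe (i j : Fin n) :
    QuadraticMap.polar (hypQ R n) (hypF R n i) (hypE R n j) = if i = j then 1 else 0 := by
  rw [QuadraticMap.polar_comm, polar_ef]
  simp [eq_comm]

lemma hypQ_e (i : Fin n) : hypQ R n (hypE R n i) = 0 := by simp [hypQ_apply, hypE]

lemma hypQ_f (i : Fin n) : hypQ R n (hypF R n i) = 0 := by simp [hypQ_apply, hypF]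

lemma exists_third {n : ℕ} (hn : 3 ≤ n) (i j : Fin n) : ∃ k : Fin n, k ≠ i ∧ k ≠ j := by
  have hcompl : (({i, j} : Finset (Fin n))ᶜ).Nonempty := by
    rw [← Finset.card_pos, Finset.card_compl]
    have h2 : ({i, j} : Finset (Fin n)).card ≤ 2 :=
      (Finset.card_insert_le _ _).trans (by simp)
    have : Fintype.card (Fin n) = n := Fintype.card_fin n
    omega
  obtain ⟨k, hk⟩ := hcompl
  simp only [Finset.mem_compl, Finset.mem_insert, Finset.mem_singleton, not_or] at hk
  exact ⟨k, hk.1, hk.2⟩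

end HypLemmas

/-- Trace-zero sections are carried by the canonical map into alternating elements of the
Clifford algebra. -/
theorem canonC_ker_trd_mem_alt {R : Type*} [CommRing R] {n : ℕ} (hn : 3 ≤ n)
    (z : ((Fin n → R) × (Fin n → R)) ⊗[R] ((Fin n → R) × (Fin n → R)))
    (hz : z ∈ LinearMap.ker (trdT R n)) :
    canonC R n z ∈ LinearMap.range
      (LinearMap.id - (reverse (Q := hypQ R n) : CliffordAlgebra (hypQ R n) →ₗ[R] CliffordAlgebra (hypQ R n))) := by
  set M := (Fin n → R) × (Fin n → R)
  set Cl := CliffordAlgebra (hypQ R n)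
  set S : Submodule R Cl := LinearMap.range
      (LinearMap.id - (reverse (Q := hypQ R n) : Cl →ₗ[R] Cl)) with hS
  show canonC R n z ∈ S
  have hn0 : 0 < n := by omega
  set i0 : Fin n := ⟨0, hn0⟩ with hi0
  set E : Cl := ι (hypQ R n) (hypE R n i0) * ι (hypQ R n) (hypF R n i0) with hE
  -- the key pointwise lemma
  have key : ∀ m₁ m₂ : M, ι (hypQ R n) m₁ * ι (hypQ R n) m₂ -
      QuadraticMap.polar (hypQ R n) m₁ m₂ • E ∈ S := by
    set ψ : M →ₗ[R] M →ₗ[R] Cl :=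
      ((LinearMap.mul R Cl).compl₁₂ (ι (hypQ R n)) (ι (hypQ R n))) -
        ((QuadraticMap.polarBilin (hypQ R n)).compr₂ (LinearMap.toSpanSingleton R Cl E)) with hψdef
    have hψ : ∀ m₁ m₂ : M, ψ m₁ m₂ = ι (hypQ R n) m₁ * ι (hypQ R n) m₂ -
        QuadraticMap.polar (hypQ R n) m₁ m₂ • E := fun m₁ m₂ => rfl
    intro m₁ m₂
    rw [← hψ m₁ m₂]
    set bb : Module.Basis (Fin n ⊕ Fin n) R M :=
      (Pi.basisFun R (Fin n)).prod (Pi.basisFun R (Fin n)) with hbb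
    have hbl : ∀ i : Fin n, bb (Sum.inl i) = hypE R n i := by
      intro i
      refine Prod.ext ?_ ?_
      · rw [Module.Basis.prod_apply_inl_fst, Pi.basisFun_apply]; rfl
      · rw [Module.Basis.prod_apply_inl_snd]; rfl
    have hbr : ∀ i : Fin n, bb (Sum.inr i) = hypF R n i := by
      intro i
      refine Prod.ext ?_ ?_
      · rw [Module.Basis.prod_apply_inr_fst]; rfl
      · rw [Module.Basis.prod_apply_inr_snd, Pi.basisFun_apply]; rfl
    refine bilin_mem_of_basis bb ψ S (fun p q => ?_) m₁ m₂
    cases p with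
    | inl i =>
      cases q with
      | inl j =>
        rw [hψ, hbl, hbl, polar_ee, zero_smul, sub_zero]
        by_cases hij : i = j
        · subst hij
          rw [ι_sq_scalar, hypQ_e, map_zero]
          exact S.zero_mem
        · obtain ⟨k, hki, hkj⟩ := exists_third hn i j
          refine mem_alt_A (hypE R n k) (hypF R n k) ?_ ?_ ?_ ?_ ?_ ?_
          · rw [polar_ef]; simp
          · rw [polar_ee]
          · rw [polar_ee]
          · rw [polar_fe]; simp [hki]
          · rw [polar_fe]; simp [hkj]
          · rw [polar_ee]
      | inr j =>
        rw [hψ, hbl, hbr, polar_ef]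
        by_cases hij : i = j
        · subst hij
          rw [if_pos rfl, one_smul]
          by_cases hi : i = i0
          · rw [hi, ← hE, sub_self]
            exact S.zero_mem
          · refine mem_alt_B (hypE R n i0) (hypF R n i0) ?_ ?_ ?_ ?_ ?_ ?_
            · rw [polar_ef]; simp
            · rw [polar_ef]; simp
            · rw [polar_ee]
            · rw [polar_ef]; simp [Ne.symm hi]
            · rw [polar_fe]; simp [Ne.symm hi]
            · rw [polar_ff]
        · rw [if_neg hij, zero_smul, sub_zero]
          obtain ⟨k, hki, hkj⟩ := exists_third hn i j
          refine mem_alt_A (hypE R n k) (hypF R n k) ?_ ?_ ?_ ?_ ?_ ?_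
          · rw [polar_ef]; simp
          · rw [polar_ee]
          · rw [polar_ef]; simp [hkj]
          · rw [polar_fe]; simp [hki]
          · rw [polar_ff]
          · rw [polar_ef]; simp [hij]
    | inr i =>
      cases q with
      | inl j =>
        rw [hψ, hbr, hbl, polar_fe]
        by_cases hij : i = j
        · subst hij
          rw [if_pos rfl, one_smul]
          have h2 : ι (hypQ R n) (hypE R n i) * ι (hypQ R n) (hypF R n i) - E ∈ S := by
            by_cases hi : i = i0
            · rw [hi, ← hE, sub_self]
              exact S.zero_mem
            · rw [hE]
              refine mem_alt_B (hypE R n i0) (hypF R n i0) ?_ ?_ ?_ ?_ ?_ ?_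
              · rw [polar_ef]; simp
              · rw [polar_ef]; simp
              · rw [polar_ee]
              · rw [polar_ef]; simp [Ne.symm hi]
              · rw [polar_fe]; simp [Ne.symm hi]
              · rw [polar_ff]
          have h1 : ι (hypQ R n) (hypF R n i) * ι (hypQ R n) (hypE R n i) -
              ι (hypQ R n) (hypE R n i) * ι (hypQ R n) (hypF R n i) ∈ S :=
            mem_alt_swap _ _
          have h3 := S.add_mem h1 h2
          rwa [sub_add_sub_cancel] at h3
        · rw [if_neg hij, zero_smul, sub_zero]
          obtain ⟨k, hki, hkj⟩ := exists_third hn i j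
          refine mem_alt_A (hypE R n k) (hypF R n k) ?_ ?_ ?_ ?_ ?_ ?_
          · rw [polar_ef]; simp
          · rw [polar_ef]; simp [hki]
          · rw [polar_ee]
          · rw [polar_ff]
          · rw [polar_fe]; simp [hkj]
          · rw [polar_fe]; simp [hij]
      | inr j =>
        rw [hψ, hbr, hbr, polar_ff, zero_smul, sub_zero]
        by_cases hij : i = j
        · subst hij
          rw [ι_sq_scalar, hypQ_f, map_zero]
          exact S.zero_mem
        · obtain ⟨k, hki, hkj⟩ := exists_third hn i j
          refine mem_alt_A (hypE R n k) (hypF R n k) ?_ ?_ ?_ ?_ ?_ ?_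
          · rw [polar_ef]; simp
          · rw [polar_ef]; simp [hki]
          · rw [polar_ef]; simp [hkj]
          · rw [polar_ff]
          · rw [polar_ff]
          · rw [polar_ff]
  -- assemble
  set L : (M ⊗[R] M) →ₗ[R] Cl := canonC R n - (trdT R n).smulRight E with hL
  have hLmem : ∀ w : M ⊗[R] M, L w ∈ S := by
    intro w
    induction w using TensorProduct.induction_on with
    | zero => rw [map_zero]; exact S.zero_mem
    | tmul m₁ m₂ =>
      have heq : L (m₁ ⊗ₜ[R] m₂) = ι (hypQ R n) m₁ * ι (hypQ R n) m₂ -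
          QuadraticMap.polar (hypQ R n) m₁ m₂ • E := by
        simp [hL, canonC, trdT, TensorProduct.lift.tmul]
      rw [heq]
      exact key m₁ m₂
    | add x y hx hy => rw [map_add]; exact S.add_mem hx hy
  have hz' : trdT R n z = 0 := LinearMap.mem_ker.mp hz
  have hcz : canonC R n z = L z := by
    rw [hL, LinearMap.sub_apply, LinearMap.smulRight_apply, hz', zero_smul, sub_zero]
  rw [hcz]
  exact hLmem z
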